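/- Let f₀ be the forecasting strategy that deterministically predicts the outcome sequence (0,1,1,1,...) and f₁ the strategy that deterministically predicts (1,1,1,...), so P₀^f = δ_{(0,1,1,...)} and P₁^f = δ_{(1,1,1,...)}. Then P₀^f and P₁^f are mutually singular, and consequently any comparison test T with T((0,1,1,...), f₀, f₁) = 1/2 is not reasonable. -/

import Mathlib

open MeasureTheory Filter Set
open scoped ENNReal

abbrev BinSeq := ℕ → Bool

/-- The cylinder set of all sequences sharing the first `t` coordinates with `ω`. -/
def cyl (ω : BinSeq) (t : ℕ) : Set BinSeq := {ω' | ∀ s < t, ω' s = ω s}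

/-- A forecasting strategy: it maps a finite history of (outcome, forecast of expert 0,
forecast of expert 1) triples to a probability (of the outcome `true`) in `[0,1]`. -/
structure Strategy where
  f : List (Bool × ℝ≥0∞ × ℝ≥0∞) → ℝ≥0∞
  le_one : ∀ h, f h ≤ 1

/-- The probability that a forecast `p` (probability of `true`) assigns to outcome `b`. -/
noncomputable def fprob (p : ℝ≥0∞) (b : Bool) : ℝ≥0∞ := if b then p else 1 - p

/-- The play-path history of length `n` induced by the realization `ω` and the ordered
pair of forecasting strategies `(f₀, f₁)`. -/
def hist (ω : BinSeq) (f₀ f₁ : Strategy) : ℕ → List (Bool × ℝ≥0∞ × ℝ≥0∞)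
  | 0 => []
  | n + 1 =>
      hist ω f₀ f₁ n ++ [(ω n, f₀.f (hist ω f₀ f₁ n), f₁.f (hist ω f₀ f₁ n))]

/-- The infinite play path induced by `(ω, f₀, f₁)`. -/
def play (ω : BinSeq) (f₀ f₁ : Strategy) (n : ℕ) : Bool × ℝ≥0∞ × ℝ≥0∞ :=
  (ω n, f₀.f (hist ω f₀ f₁ n), f₁.f (hist ω f₀ f₁ n))

/-- `P₀` and `P₁` are the pair of probability measures induced by the ordered pair of
forecasting strategies `(f₀, f₁)`: on each cylinder they are the product of the
corresponding one-step-ahead forecasts along the play path. -/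
def Induces (f₀ f₁ : Strategy) (P₀ P₁ : Measure BinSeq) : Prop :=
  IsProbabilityMeasure P₀ ∧ IsProbabilityMeasure P₁ ∧
  (∀ ω t, P₀ (cyl ω t) = ∏ n ∈ Finset.range t, fprob (f₀.f (hist ω f₀ f₁ n)) (ω n)) ∧
  (∀ ω t, P₁ (cyl ω t) = ∏ n ∈ Finset.range t, fprob (f₁.f (hist ω f₀ f₁ n)) (ω n))

/-- A comparison test: given a realization and an ordered pair of forecasting
strategies, it outputs a verdict (intended values: `0`, `1/2`, `1`). -/
abbrev Test := BinSeq → Strategy → Strategy → ℝ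

/-- The test takes only the values `0`, `1/2`, `1`. -/
def TestValued (T : Test) : Prop := ∀ ω f₀ f₁, T ω f₀ f₁ = 0 ∨ T ω f₀ f₁ = 1/2 ∨ T ω f₀ f₁ = 1

/-- Anonymity: the verdict does not depend on the identity of the experts. -/
def Anonymous (T : Test) : Prop := ∀ ω f₀ f₁, T ω f₀ f₁ = 1 - T ω f₁ f₀

/-- Non-counterfactual: the verdict depends only on the realized play path. -/
def NonCounterfactual (T : Test) : Prop :=
  ∃ T' : (ℕ → Bool × ℝ≥0∞ × ℝ≥0∞) → ℝ, ∀ ω f₀ f₁, T ω f₀ f₁ = T' (play ω f₀ f₁)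

/-- Reasonableness: for every pair of strategies with induced measures `(P₀, P₁)` and
every measurable set that one of the induced measures deems positive while the other
deems null, with positive probability the test points at the corresponding expert. -/
def Reasonable (T : Test) : Prop :=
  ∀ f₀ f₁ : Strategy, ∀ P₀ P₁ : Measure BinSeq, Induces f₀ f₁ P₀ P₁ →
    ∀ A : Set BinSeq, MeasurableSet A →
      ((0 < P₀ A ∧ P₁ A = 0) → 0 < P₀ (A ∩ {ω | T ω f₀ f₁ = 0})) ∧
      ((0 < P₁ A ∧ P₀ A = 0) → 0 < P₁ (A ∩ {ω | T ω f₀ f₁ = 1}))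

/-- The strategy deterministically predicting the sequence `(0,1,1,1,...)`. -/
noncomputable def strat0 : Strategy where
  f := fun h => match h with | [] => 0 | _ => 1
  le_one := fun h => by cases h <;> simp

/-- The strategy deterministically predicting the sequence `(1,1,1,...)`. -/
noncomputable def strat1 : Strategy where
  f := fun _ => 1
  le_one := fun _ => le_rfl

/-- The realization `(0,1,1,1,...)`. -/
def seq0 : BinSeq := fun n => decide (n ≠ 0)

/-- The measures induced by the deterministic strategies predicting `(0,1,1,...)` and
`(1,1,1,...)` are mutually singular, and consequently any comparison test that is
inconclusive at the realization `(0,1,1,...)` is not reasonable. -/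

lemma cyl_measurable (ω : BinSeq) (t : ℕ) : MeasurableSet (cyl ω t) := by
  have h : cyl ω t = ⋂ s ∈ Finset.range t, (fun ω' : BinSeq => ω' s) ⁻¹' {ω s} := by
    ext ω'; simp [cyl]
  rw [h]
  exact MeasurableSet.biInter (Finset.range t).countable_toSet
    (fun s _ => (measurable_pi_apply s) (MeasurableSet.singleton _))

lemma strat0_append (l : List (Bool × ℝ≥0∞ × ℝ≥0∞)) (x : Bool × ℝ≥0∞ × ℝ≥0∞) :
    strat0.f (l ++ [x]) = 1 := by cases l <;> rfl

lemma iInter_cyl : (⋂ t, cyl seq0 t) = {seq0} := by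
  ext ω
  simp only [Set.mem_iInter, Set.mem_singleton_iff, cyl, Set.mem_setOf_eq]
  constructor
  · intro h; funext n; exact h (n+1) n (Nat.lt_succ_self n)
  · rintro rfl; intro t s _; rfl

theorem cross_calibration_counterexample
    (P₀ P₁ : Measure BinSeq) (hInd : Induces strat0 strat1 P₀ P₁) :
    (∃ A : Set BinSeq, MeasurableSet A ∧ P₀ A = 1 ∧ P₁ A = 0) ∧
    ∀ T : Test, T seq0 strat0 strat1 = 1/2 → ¬ Reasonable T := by
  obtain ⟨hP0, hP1, h0, h1⟩ := hInd
  -- the key factor computations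
  have hseq0 : seq0 0 = false := rfl
  have hfac0 : ∀ n, fprob (strat0.f (hist seq0 strat0 strat1 n)) (seq0 n) = 1 := by
    intro n
    cases n with
    | zero => simp [hist, strat0, fprob, seq0]
    | succ m =>
        have hs : seq0 (m+1) = true := by simp [seq0]
        simp [hist, strat0_append, hs, fprob]
  have hP0cyl : ∀ t, P₀ (cyl seq0 t) = 1 := by
    intro t
    rw [h0]
    exact Finset.prod_eq_one (fun n _ => hfac0 n)
  have hAeq : P₀ (cyl seq0 1) = 1 := hP0cyl 1
  have hA1 : P₁ (cyl seq0 1) = 0 := by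
    rw [h1]
    simp [hist, strat1, fprob, seq0]
  have hsing : P₀ ({seq0} : Set BinSeq)ᶜ = 0 := by
    rw [← iInter_cyl, Set.compl_iInter]
    refine measure_iUnion_null (fun t => ?_)
    rw [measure_compl (cyl_measurable _ _) (measure_ne_top _ _), hP0cyl t]
    simp
  refine ⟨⟨cyl seq0 1, cyl_measurable _ _, hAeq, hA1⟩, ?_⟩
  intro T hT hR
  obtain ⟨h, -⟩ := hR strat0 strat1 P₀ P₁ ⟨hP0, hP1, h0, h1⟩ (cyl seq0 1)
    (cyl_measurable _ _)
  have hpos : 0 < P₀ (cyl seq0 1 ∩ {ω | T ω strat0 strat1 = 0}) :=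
    h ⟨by rw [hAeq]; norm_num, hA1⟩
  have hsub : cyl seq0 1 ∩ {ω | T ω strat0 strat1 = 0} ⊆ ({seq0} : Set BinSeq)ᶜ := by
    rintro ω ⟨-, hω⟩ hmem
    rw [Set.mem_singleton_iff] at hmem
    subst hmem
    rw [Set.mem_setOf_eq] at hω
    rw [hω] at hT
    norm_num at hT
  have : P₀ (cyl seq0 1 ∩ {ω | T ω strat0 strat1 = 0}) = 0 :=
    le_antisymm (hsing ▸ measure_mono hsub) zero_le
  rw [this] at hpos
  exact lt_irrefl _ hpos
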